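/- Let L be a simple line arrangement of n ≥ 3 lines, let u, v be distinct vertices of G_L, and let s be the number of lines l ∈ L that separate u and v (i.e., u and v lie in the two different open half-planes bounded by l). If u and v lie on a common line of L then d(u,v) ≥ s + 1, and otherwise d(u,v) ≥ s + 2. -/

import Mathlib

/-- A line in the Euclidean plane `ℝ × ℝ`, given by an affine equation. -/
def IsLine (l : Set (ℝ × ℝ)) : Prop :=
  ∃ a b c : ℝ, (a, b) ≠ (0, 0) ∧ l = {p : ℝ × ℝ | a * p.1 + b * p.2 = c}

/-- A simple line arrangement of `n` lines in the Euclidean plane: `n` distinct lines,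
every two of which meet in exactly one point, and no point lies on three of the lines. -/
structure SimpleLineArrangement (n : ℕ) where
  lines : Finset (Set (ℝ × ℝ))
  card_lines : lines.card = n
  isLine : ∀ l ∈ lines, IsLine l
  meet : ∀ l₁ ∈ lines, ∀ l₂ ∈ lines, l₁ ≠ l₂ → ∃! p : ℝ × ℝ, p ∈ l₁ ∩ l₂
  simple : ∀ p : ℝ × ℝ, ∀ l₁ ∈ lines, ∀ l₂ ∈ lines, ∀ l₃ ∈ lines,
    p ∈ l₁ → p ∈ l₂ → p ∈ l₃ → l₁ = l₂ ∨ l₁ = l₃ ∨ l₂ = l₃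

namespace SimpleLineArrangement

variable {n : ℕ}

/-- The vertex set of the arrangement: all intersection points of pairs of lines. -/
def verts (A : SimpleLineArrangement n) : Set (ℝ × ℝ) :=
  {p | ∃ l₁ ∈ A.lines, ∃ l₂ ∈ A.lines, l₁ ≠ l₂ ∧ p ∈ l₁ ∧ p ∈ l₂}

/-- The arrangement graph: two distinct vertices are adjacent iff some line of the
arrangement contains both and no other vertex lies strictly between them on that line. -/
def graph (A : SimpleLineArrangement n) : SimpleGraph (ℝ × ℝ) where
  Adj u v := u ≠ v ∧ u ∈ A.verts ∧ v ∈ A.verts ∧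
    ∃ l ∈ A.lines, u ∈ l ∧ v ∈ l ∧ ∀ w ∈ A.verts, w ∈ l → ¬ Sbtw ℝ u w v
  symm := by
    constructor
    rintro u v ⟨huv, hu, hv, l, hl, hul, hvl, hbet⟩
    exact ⟨huv.symm, hv, hu, l, hl, hvl, hul, fun w hw hwl hb => hbet w hw hwl hb.symm⟩
  loopless := by constructor; rintro u ⟨h, -⟩; exact h rfl

/-- The degree of a vertex in the arrangement graph. -/
noncomputable def deg (A : SimpleLineArrangement n) (v : ℝ × ℝ) : ℕ :=
  {w | A.graph.Adj v w}.ncard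

/-- The number of vertices of the arrangement graph having degree `i`. -/
noncomputable def degCount (A : SimpleLineArrangement n) (i : ℕ) : ℕ :=
  {v | v ∈ A.verts ∧ A.deg v = i}.ncard

/-- The eccentricity of a vertex: the maximum graph distance to a vertex. -/
noncomputable def ecc (A : SimpleLineArrangement n) (u : ℝ × ℝ) : ℕ :=
  sSup ((fun v => A.graph.dist u v) '' A.verts)

/-- The realization `R(L)`: the union of the closed segments joining adjacent vertices. -/
def realization (A : SimpleLineArrangement n) : Set (ℝ × ℝ) :=
  ⋃ (u : ℝ × ℝ) (v : ℝ × ℝ) (_ : A.graph.Adj u v), segment ℝ u v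

/-- A point lies on the outer face of the realization if it belongs to the closure of
the unbounded connected component of the complement of the realization. -/
def OnOuterFace (A : SimpleLineArrangement n) (p : ℝ × ℝ) : Prop :=
  ∃ q : ℝ × ℝ, q ∉ A.realization ∧
    ¬ Bornology.IsBounded (connectedComponentIn (A.realization)ᶜ q) ∧
    p ∈ closure (connectedComponentIn (A.realization)ᶜ q)

end SimpleLineArrangement

/-- The line `l` separates the points `u` and `v`: they lie in the two different
open half-planes bounded by `l`. -/
def SeparatedBy (l : Set (ℝ × ℝ)) (u v : ℝ × ℝ) : Prop :=
  ∃ a b c : ℝ, (a, b) ≠ (0, 0) ∧ l = {p : ℝ × ℝ | a * p.1 + b * p.2 = c} ∧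
    (a * u.1 + b * u.2 - c) * (a * v.1 + b * v.2 - c) < 0


namespace SimpleLineArrangement
variable {n : ℕ}

/-- Two lines of the arrangement through two distinct common points coincide. -/
lemma line_eq (A : SimpleLineArrangement n) {l₁ l₂ : Set (ℝ × ℝ)} (h1 : l₁ ∈ A.lines)
    (h2 : l₂ ∈ A.lines) {p q : ℝ × ℝ} (hpq : p ≠ q) (hp1 : p ∈ l₁) (hq1 : q ∈ l₁)
    (hp2 : p ∈ l₂) (hq2 : q ∈ l₂) : l₁ = l₂ := by
  by_contra h
  obtain ⟨x, -, hx'⟩ := A.meet l₁ h1 l₂ h2 h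
  exact hpq ((hx' p ⟨hp1, hp2⟩).trans (hx' q ⟨hq1, hq2⟩).symm)

lemma verts_finite (A : SimpleLineArrangement n) : A.verts.Finite := by
  have hsub : A.verts ⊆ ⋃ l₁ ∈ (A.lines : Set (Set (ℝ × ℝ))), ⋃ l₂ ∈ (A.lines : Set (Set (ℝ × ℝ))),
      {p | p ∈ l₁ ∧ p ∈ l₂ ∧ l₁ ≠ l₂} := by
    rintro p ⟨l₁, h1, l₂, h2, hne, hp1, hp2⟩
    exact Set.mem_biUnion h1 (Set.mem_biUnion h2 ⟨hp1, hp2, hne⟩)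
  refine Set.Finite.subset ?_ hsub
  refine Set.Finite.biUnion A.lines.finite_toSet fun l₁ h1 => ?_
  refine Set.Finite.biUnion A.lines.finite_toSet fun l₂ h2 => ?_
  by_cases hne : l₁ = l₂
  · have : {p | p ∈ l₁ ∧ p ∈ l₂ ∧ l₁ ≠ l₂} = ∅ := by
      ext p; simp [hne]
    rw [this]; exact Set.finite_empty
  · apply Set.Subsingleton.finite
    intro x hx y hy
    obtain ⟨z, -, hz⟩ := A.meet l₁ h1 l₂ h2 hne
    exact (hz x ⟨hx.1, hx.2.1⟩).trans (hz y ⟨hy.1, hy.2.1⟩).symm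

end SimpleLineArrangement

/-- IVT crossing: if an affine functional has strictly opposite signs at `p` and `q`,
some point strictly between them lies on its zero line, and satisfies every affine
equation satisfied by both `p` and `q`. -/
lemma cross_exists {a b c : ℝ} {p q : ℝ × ℝ}
    (hp : 0 < a * p.1 + b * p.2 - c) (hq : a * q.1 + b * q.2 - c < 0) :
    ∃ x : ℝ × ℝ, Sbtw ℝ p x q ∧ a * x.1 + b * x.2 = c ∧
      ∀ a' b' c' : ℝ, a' * p.1 + b' * p.2 = c' → a' * q.1 + b' * q.2 = c' →
        a' * x.1 + b' * x.2 = c' := by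
  set fp := a * p.1 + b * p.2 - c with hfp
  set fq := a * q.1 + b * q.2 - c with hfq
  have hd : 0 < fp - fq := by linarith
  set t : ℝ := fp / (fp - fq) with ht
  have ht0 : 0 < t := div_pos hp hd
  have ht1 : t < 1 := (div_lt_one hd).2 (by linarith)
  have hpq : p ≠ q := by
    intro h; rw [h] at hfp; rw [hfp] at hp; rw [hfq] at hq; linarith
  refine ⟨AffineMap.lineMap p q t, ?_, ?_, ?_⟩
  · exact sbtw_lineMap_iff.2 ⟨hpq, ht0, ht1⟩
  · have hco : (AffineMap.lineMap p q t : ℝ × ℝ) = (p.1 + t*(q.1-p.1), p.2 + t*(q.2-p.2)) := by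
      simp [AffineMap.lineMap_apply, Prod.ext_iff]; constructor <;> ring
    rw [hco]
    have : t * (fp - fq) = fp := by
      rw [ht]; field_simp
    simp only [hfp, hfq] at this ⊢
    nlinarith [this]
  · intro a' b' c' h1 h2
    have hco : (AffineMap.lineMap p q t : ℝ × ℝ) = (p.1 + t*(q.1-p.1), p.2 + t*(q.2-p.2)) := by
      simp [AffineMap.lineMap_apply, Prod.ext_iff]; constructor <;> ring
    rw [hco]
    simp only []
    nlinarith [h1, h2]

namespace SimpleLineArrangement
variable {n : ℕ}

/-- Vertices on a common line are reachable in the arrangement graph. -/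
lemma reach_on_line (A : SimpleLineArrangement n) :
    ∀ N : ℕ, ∀ l ∈ A.lines, ∀ x y : ℝ × ℝ, x ∈ A.verts → y ∈ A.verts → x ∈ l → y ∈ l →
    {z | z ∈ A.verts ∧ z ∈ l ∧ Sbtw ℝ x z y}.ncard ≤ N → A.graph.Reachable x y := by
  intro N
  induction N with
  | zero =>
    intro l hl x y hx hy hxl hyl hcard
    by_cases hxy : x = y
    · exact hxy ▸ SimpleGraph.Reachable.refl x
    have hfin : {z | z ∈ A.verts ∧ z ∈ l ∧ Sbtw ℝ x z y}.Finite :=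
      A.verts_finite.subset fun z hz => hz.1
    have hemp : {z | z ∈ A.verts ∧ z ∈ l ∧ Sbtw ℝ x z y} = ∅ :=
      (Set.ncard_eq_zero hfin).1 (Nat.le_zero.1 hcard)
    have hadj : A.graph.Adj x y := ⟨hxy, hx, hy, l, hl, hxl, hyl, fun w hw hwl hs =>
      absurd hemp (Set.nonempty_iff_ne_empty.1 ⟨w, hw, hwl, hs⟩)⟩
    exact hadj.reachable
  | succ N ih =>
    intro l hl x y hx hy hxl hyl hcard
    by_cases hxy : x = y
    · exact hxy ▸ SimpleGraph.Reachable.refl x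
    set B := {z | z ∈ A.verts ∧ z ∈ l ∧ Sbtw ℝ x z y} with hB
    have hfin : B.Finite := A.verts_finite.subset fun z hz => hz.1
    rcases Set.eq_empty_or_nonempty B with hemp | ⟨z, hz⟩
    · have hadj : A.graph.Adj x y := ⟨hxy, hx, hy, l, hl, hxl, hyl, fun w hw hwl hs =>
        absurd hemp (Set.nonempty_iff_ne_empty.1 ⟨w, hw, hwl, hs⟩)⟩
      exact hadj.reachable
    · obtain ⟨hzv, hzl, hzs⟩ := hz
      have hsub1 : {w | w ∈ A.verts ∧ w ∈ l ∧ Sbtw ℝ x w z} ⊆ B \ {z} := by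
        rintro w ⟨hwv, hwl, hws⟩
        refine ⟨⟨hwv, hwl, hzs.trans_left hws⟩, ?_⟩
        intro h; rw [Set.mem_singleton_iff] at h; exact hws.2.2 (by rw [h])
      have hsub2 : {w | w ∈ A.verts ∧ w ∈ l ∧ Sbtw ℝ z w y} ⊆ B \ {z} := by
        rintro w ⟨hwv, hwl, hws⟩
        refine ⟨⟨hwv, hwl, hzs.trans_right hws⟩, ?_⟩
        intro h; rw [Set.mem_singleton_iff] at h; exact hws.2.1 (by rw [h])
      have hdcard : (B \ {z}).ncard ≤ N := by
        have hzB : z ∈ B := by exact ⟨hzv, hzl, hzs⟩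
        have := Set.ncard_diff_singleton_of_mem hzB
        omega
      have h1 := ih l hl x z hx hzv hxl hzl
        (le_trans (Set.ncard_le_ncard hsub1 hfin.diff) hdcard)
      have h2 := ih l hl z y hzv hy hzl hyl
        (le_trans (Set.ncard_le_ncard hsub2 hfin.diff) hdcard)
      exact h1.trans h2

lemma reachable (A : SimpleLineArrangement n) {u v : ℝ × ℝ} (hu : u ∈ A.verts)
    (hv : v ∈ A.verts) : A.graph.Reachable u v := by
  obtain ⟨l₁, hl₁, l₂, hl₂, hne, hu1, hu2⟩ := hu
  obtain ⟨m₁, hm₁, m₂, hm₂, hne', hv1, hv2⟩ := hv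
  have huv' : u ∈ A.verts := ⟨l₁, hl₁, l₂, hl₂, hne, hu1, hu2⟩
  have hvv' : v ∈ A.verts := ⟨m₁, hm₁, m₂, hm₂, hne', hv1, hv2⟩
  by_cases h : l₁ = m₁
  · exact A.reach_on_line _ l₁ hl₁ u v huv' hvv' hu1 (h ▸ hv1) le_rfl
  · obtain ⟨q, hq, -⟩ := A.meet l₁ hl₁ m₁ hm₁ h
    have hqv : q ∈ A.verts := ⟨l₁, hl₁, m₁, hm₁, h, hq.1, hq.2⟩
    exact (A.reach_on_line _ l₁ hl₁ u q huv' hqv hu1 hq.1 le_rfl).trans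
      (A.reach_on_line _ m₁ hm₁ q v hqv hvv' hq.2 hv1 le_rfl)

end SimpleLineArrangement

lemma sep_normalize {l : Set (ℝ × ℝ)} {u v : ℝ × ℝ} (h : SeparatedBy l u v) :
    ∃ a b c : ℝ, l = {p : ℝ × ℝ | a * p.1 + b * p.2 = c} ∧
      0 < a * u.1 + b * u.2 - c ∧ a * v.1 + b * v.2 - c < 0 := by
  obtain ⟨a, b, c, -, hl, hprod⟩ := h
  rcases lt_trichotomy (a * u.1 + b * u.2 - c) 0 with hu | hu | hu
  · refine ⟨-a, -b, -c, ?_, by linarith, by nlinarith⟩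
    rw [hl]; ext z; simp only [Set.mem_setOf_eq]; constructor <;> intro <;> linarith
  · rw [hu, zero_mul] at hprod; exact absurd hprod (lt_irrefl 0)
  · exact ⟨a, b, c, hl, hu, by nlinarith⟩

lemma sep_not_mem_left {l : Set (ℝ × ℝ)} {u v : ℝ × ℝ} (h : SeparatedBy l u v) : u ∉ l := by
  obtain ⟨a, b, c, hl, hu, hv⟩ := sep_normalize h
  intro hmem
  rw [hl] at hmem
  simp only [Set.mem_setOf_eq] at hmem
  linarith

lemma sep_not_mem_right {l : Set (ℝ × ℝ)} {u v : ℝ × ℝ} (h : SeparatedBy l u v) : v ∉ l := by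
  obtain ⟨a, b, c, hl, hu, hv⟩ := sep_normalize h
  intro hmem
  rw [hl] at hmem
  simp only [Set.mem_setOf_eq] at hmem
  linarith

namespace SimpleLineArrangement
variable {n : ℕ}

lemma walk_bound (A : SimpleLineArrangement n) {u v : ℝ × ℝ} (huv : u ≠ v)
    (p : A.graph.Walk u v) :
    {l | l ∈ A.lines ∧ SeparatedBy l u v}.ncard + 1 ≤ p.length ∧
    ((¬ ∃ l ∈ A.lines, u ∈ l ∧ v ∈ l) →
      {l | l ∈ A.lines ∧ SeparatedBy l u v}.ncard + 2 ≤ p.length) := by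
  classical
  set d := p.length with hd
  set w : ℕ → ℝ × ℝ := fun i => p.getVert i with hwdef
  have hw0 : w 0 = u := p.getVert_zero
  have hwd : w d = v := p.getVert_length
  have hdpos : 0 < d := by
    rcases Nat.eq_zero_or_pos d with h | h
    · exfalso; apply huv; rw [← hw0, ← hwd, h]
    · exact h
  have hline : ∀ i, i < d → ∃ l, l ∈ A.lines ∧ w i ∈ l ∧ w (i+1) ∈ l ∧
      ∀ z ∈ A.verts, z ∈ l → ¬ Sbtw ℝ (w i) z (w (i+1)) := by
    intro i hi
    obtain ⟨-, -, -, l, hl, h1, h2, h3⟩ := p.adj_getVert_succ hi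
    exact ⟨l, hl, h1, h2, h3⟩
  choose! lf hlf1 hlf2 hlf3 hlf4 using hline
  -- the key junction lemma
  have hjunction : ∀ m, m ∈ A.lines → SeparatedBy m u v → (∀ i, i < d → lf i ≠ m) →
      ∃ k, 1 ≤ k ∧ k < d ∧ w k ∈ m ∧ lf (k-1) = lf k := by
    intro m hm hsep hno
    obtain ⟨a, b, c, hmeq, hfu, hfv⟩ := sep_normalize hsep
    have hmem : ∀ z : ℝ × ℝ, z ∈ m ↔ a * z.1 + b * z.2 - c = 0 := by
      intro z; rw [hmeq]; simp only [Set.mem_setOf_eq]; constructor <;> intro <;> linarith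
    -- no edge crosses m with strictly opposite signs
    have hnc : ∀ i, i < d → 0 < a * (w i).1 + b * (w i).2 - c →
        0 ≤ a * (w (i+1)).1 + b * (w (i+1)).2 - c := by
      intro i hi hpos
      by_contra hneg
      push_neg at hneg
      obtain ⟨x, hxs, hxm, hxall⟩ := cross_exists hpos hneg
      obtain ⟨a₂, b₂, c₂, -, hleq⟩ := A.isLine (lf i) (hlf1 i hi)
      have h1 : a₂ * (w i).1 + b₂ * (w i).2 = c₂ := by
        have := hlf2 i hi; rw [hleq] at this; exact this
      have h2 : a₂ * (w (i+1)).1 + b₂ * (w (i+1)).2 = c₂ := by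
        have := hlf3 i hi; rw [hleq] at this; exact this
      have hx_lf : x ∈ lf i := by rw [hleq]; exact hxall a₂ b₂ c₂ h1 h2
      have hxm' : x ∈ m := (hmem x).2 (by linarith)
      have hne : lf i ≠ m := hno i hi
      have hxv : x ∈ A.verts := ⟨lf i, hlf1 i hi, m, hm, hne, hx_lf, hxm'⟩
      exact hlf4 i hi x hxv hx_lf hxs
    set P : ℕ → Prop := fun t => 0 < a * (w t).1 + b * (w t).2 - c with hP
    have hP0 : P 0 := by rw [hP]; simp only [hw0]; exact hfu
    set i := Nat.findGreatest P d with hi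
    have hPi : P i := Nat.findGreatest_spec (Nat.zero_le d) hP0
    have hid : i ≤ d := Nat.findGreatest_le d
    have hine : i ≠ d := by
      intro h
      rw [h, hP] at hPi
      simp only [hwd] at hPi
      linarith
    have hilt : i < d := lt_of_le_of_ne hid hine
    have hnotP : ¬ P (i+1) := fun h =>
      Nat.findGreatest_is_greatest (Nat.lt_succ_self i) (by omega) h
    have hge : 0 ≤ a * (w (i+1)).1 + b * (w (i+1)).2 - c := hnc i hilt hPi
    have hzero : a * (w (i+1)).1 + b * (w (i+1)).2 - c = 0 := by
      rw [hP] at hnotP; push_neg at hnotP; linarith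
    have hwm : w (i+1) ∈ m := (hmem _).2 hzero
    have hkd : i + 1 < d := by
      rcases lt_or_eq_of_le (Nat.succ_le_of_lt hilt) with h | h
      · exact h
      · exfalso
        have h' : i + 1 = d := h
        rw [h'] at hzero; simp only [hwd] at hzero; linarith
    refine ⟨i + 1, by omega, hkd, hwm, ?_⟩
    simp only [Nat.add_sub_cancel]
    rcases A.simple (w (i+1)) (lf i) (hlf1 i hilt) (lf (i+1)) (hlf1 (i+1) hkd) m hm
      (hlf3 i hilt) (hlf2 (i+1) hkd) hwm with h | h | h
    · exact h
    · exact absurd h (hno i hilt)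
    · exact absurd h (hno (i+1) hkd)
  -- Finsets for counting
  set S := A.lines.filter (fun l => SeparatedBy l u v) with hS
  have hSmem : ∀ m ∈ S, m ∈ A.lines ∧ SeparatedBy m u v := by
    intro m hm; exact Finset.mem_filter.1 hm
  set J := Finset.Ico 1 d with hJ
  set T := J.filter (fun k => lf (k-1) = lf k) with hT
  set R := J.filter (fun k => ¬ lf (k-1) = lf k) with hR
  have hTR : T.card + R.card = d - 1 := by
    rw [hT, hR, Finset.card_filter_add_card_filter_not, hJ, Nat.card_Ico]
  set Sa := S.filter (fun m => ∃ i, i < d ∧ lf i = m) with hSa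
  set Sb := S.filter (fun m => ¬ ∃ i, i < d ∧ lf i = m) with hSb
  have hSab : Sa.card + Sb.card = S.card :=
    Finset.card_filter_add_card_filter_not _
  -- first-occurrence map for Sa
  have hSaR : ∀ m, ∃ k, m ∈ Sa → k ∈ R ∧ lf k = m ∧ k < d ∧ ∀ j, j < k → lf j ≠ m := by
    intro m
    by_cases hm : m ∈ Sa
    · rw [hSa, Finset.mem_filter] at hm
      obtain ⟨hmS, hex⟩ := hm
      obtain ⟨hml, hsep⟩ := hSmem m hmS
      set k := Nat.find hex with hk
      obtain ⟨hkd, hkm⟩ := Nat.find_spec hex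
      have hmin : ∀ j, j < k → ¬ (j < d ∧ lf j = m) := fun j hj => Nat.find_min hex hj
      have hk0 : k ≠ 0 := by
        intro h0
        have hl0 : lf 0 = m := by rw [← h0]; exact hkm
        have hu0 : u ∈ m := by rw [← hl0, ← hw0]; exact hlf2 0 hdpos
        exact sep_not_mem_left hsep hu0
      refine ⟨k, fun _ => ⟨?_, hkm, hkd, fun j hj he => hmin j hj ⟨lt_trans hj hkd, he⟩⟩⟩
      rw [hR, Finset.mem_filter]
      refine ⟨Finset.mem_Ico.2 ⟨Nat.one_le_iff_ne_zero.2 hk0, hkd⟩, ?_⟩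
      intro heq
      exact hmin (k-1) (by omega) ⟨by omega, heq.trans hkm⟩
    · exact ⟨0, fun h => absurd h hm⟩
  choose fa hfa using hSaR
  -- junction map for Sb
  have hSbT : ∀ m, ∃ k, m ∈ Sb → k ∈ T ∧ w k ∈ m ∧ k < d ∧ lf k ≠ m := by
    intro m
    by_cases hm : m ∈ Sb
    · rw [hSb, Finset.mem_filter] at hm
      obtain ⟨hmS, hnex⟩ := hm
      obtain ⟨hml, hsep⟩ := hSmem m hmS
      have hno : ∀ i, i < d → lf i ≠ m := by
        intro i hi he; exact hnex ⟨i, hi, he⟩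
      obtain ⟨k, hk1, hkd, hwk, hlk⟩ := hjunction m hml hsep hno
      refine ⟨k, fun _ => ⟨?_, hwk, hkd, hno k hkd⟩⟩
      rw [hT, Finset.mem_filter]
      exact ⟨Finset.mem_Ico.2 ⟨hk1, hkd⟩, hlk⟩
    · exact ⟨0, fun h => absurd h hm⟩
  choose fb hfb using hSbT
  have hcard_b : Sb.card ≤ T.card := by
    refine Finset.card_le_card_of_injOn fb (fun m hm => (hfb m hm).1) ?_
    intro m hm m' hm' he
    rw [Finset.mem_coe] at hm hm'
    obtain ⟨-, hwm, hkd, hlk⟩ := hfb m hm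
    obtain ⟨-, hwm', hkd', hlk'⟩ := hfb m' hm'
    rw [← he] at hwm' hlk'
    have hmS := (hSmem m (Finset.mem_filter.1 hm).1).1
    have hmS' := (hSmem m' (Finset.mem_filter.1 hm').1).1
    rcases A.simple (w (fb m)) m hmS m' hmS' (lf (fb m)) (hlf1 _ hkd)
      hwm hwm' (hlf2 _ hkd) with h | h | h
    · exact h
    · exact absurd h.symm hlk
    · exact absurd h.symm hlk'
  have hcard_a : Sa.card ≤ R.card := by
    refine Finset.card_le_card_of_injOn fa (fun m hm => (hfa m hm).1) ?_
    intro m hm m' hm' he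
    rw [Finset.mem_coe] at hm hm'
    have h1 := (hfa m hm).2.1
    have h2 := (hfa m' hm').2.1
    rw [← h1, ← h2, he]
  -- case 2 refinement
  have hcase2 : (¬ ∃ l ∈ A.lines, u ∈ l ∧ v ∈ l) → Sa.card + 1 ≤ R.card := by
    intro hnocomm
    have hRne : R.Nonempty := by
      by_contra hne
      rw [Finset.not_nonempty_iff_eq_empty] at hne
      have hconst : ∀ j, j < d → lf j = lf 0 := by
        intro j
        induction j with
        | zero => intro _; rfl
        | succ j ihj =>
          intro hjd
          have hjR : (j+1) ∉ R := by rw [hne]; exact Finset.notMem_empty _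
          have hstep : lf ((j+1)-1) = lf (j+1) := by
            by_contra hne2
            exact hjR (by
              rw [hR]
              exact Finset.mem_filter.2 ⟨Finset.mem_Ico.2 ⟨by omega, hjd⟩, hne2⟩)
          simp only [Nat.add_sub_cancel] at hstep
          rw [← hstep]; exact ihj (by omega)
      refine hnocomm ⟨lf 0, hlf1 0 hdpos, by rw [← hw0]; exact hlf2 0 hdpos, ?_⟩
      have hvd := hlf3 (d-1) (by omega)
      have heq : (d-1) + 1 = d := by omega
      rw [heq] at hvd
      rw [hconst (d-1) (by omega)] at hvd
      rw [← hwd]; exact hvd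
    set r := R.max' hRne with hr
    have hcard : Sa.card ≤ (R.erase r).card := by
      refine Finset.card_le_card_of_injOn fa (fun m hm => ?_) ?_
      · obtain ⟨hfaR, hfam, hfad, hfamin⟩ := hfa m hm
        refine Finset.mem_erase.2 ⟨?_, hfaR⟩
        intro heqr
        -- lf is constant from r to d-1, so lf (d-1) = m, but v ∈ lf (d-1), contradiction
        have hsep : SeparatedBy m u v := (hSmem m (Finset.mem_filter.1 hm).1).2
        have htail : ∀ j, fa m ≤ j → j < d → lf j = m := by
          intro j hj hjd
          induction j with
          | zero =>
            have h0 : fa m = 0 := Nat.le_zero.1 hj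
            rw [h0] at hfam; exact hfam
          | succ j ihj =>
            rcases Nat.lt_or_ge j (fa m) with hlt | hge
            · have : fa m = j + 1 := by omega
              rw [← this]; exact hfam
            · have hjd' : j < d := by omega
              have hij := ihj hge hjd'
              have hstraight : lf j = lf (j+1) := by
                by_contra hne2
                have hmem2 : (j+1) ∈ R := by
                  rw [hR]
                  refine Finset.mem_filter.2 ⟨Finset.mem_Ico.2 ⟨by omega, hjd⟩, ?_⟩
                  simp only [Nat.add_sub_cancel]; exact hne2
                have := R.le_max' (j+1) hmem2
                rw [← hr] at this
                omega
              rw [← hstraight]; exact hij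
        have hlast : lf (d-1) = m := htail (d-1) (by
            have : fa m < d := hfad
            have : fa m = r := heqr
            have hrd : r < d := by
              have := Finset.mem_Ico.1 (Finset.mem_filter.1 (R.max'_mem hRne)).1
              omega
            omega) (by omega)
        have hvd := hlf3 (d-1) (by omega)
        have heqd : (d-1) + 1 = d := by omega
        rw [heqd, hwd, hlast] at hvd
        exact sep_not_mem_right hsep hvd
      · intro m hm m' hm' he
        rw [Finset.mem_coe] at hm hm'
        have h1 := (hfa m hm).2.1
        have h2 := (hfa m' hm').2.1
        rw [← h1, ← h2, he]
    have herase := Finset.card_erase_of_mem (R.max'_mem hRne)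
    rw [← hr] at herase
    have hpos := Finset.card_pos.2 hRne
    omega
  -- assemble
  have hset : {l | l ∈ A.lines ∧ SeparatedBy l u v} = ↑S := by
    ext l; simp [hS]
  rw [hset, Set.ncard_coe_finset]
  have hlen : p.length = d := rfl
  constructor
  · omega
  · intro h
    have := hcase2 h
    omega

end SimpleLineArrangement


theorem dist_ge_separating_lines (n : ℕ) (hn : 3 ≤ n) (A : SimpleLineArrangement n)
    (u v : ℝ × ℝ) (hu : u ∈ A.verts) (hv : v ∈ A.verts) (huv : u ≠ v) :
    ((∃ l ∈ A.lines, u ∈ l ∧ v ∈ l) →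
      {l | l ∈ A.lines ∧ SeparatedBy l u v}.ncard + 1 ≤ A.graph.dist u v) ∧
    (¬ (∃ l ∈ A.lines, u ∈ l ∧ v ∈ l) →
      {l | l ∈ A.lines ∧ SeparatedBy l u v}.ncard + 2 ≤ A.graph.dist u v) := by
  have hreach := A.reachable hu hv
  obtain ⟨p, hp⟩ := hreach.exists_walk_length_eq_dist
  obtain ⟨h1, h2⟩ := A.walk_bound huv p
  rw [hp] at h1 h2
  exact ⟨fun _ => h1, h2⟩
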